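/- Let P be a finite set of m points in a metric space with optimal median x* and cost OPT. Suppose at most δm points p satisfy cost(p,P) < (2−α)OPT, and let γm be the number of points p with (1−α)OPT ≤ d(x*,p) ≤ (1+α)OPT. Then γ ≥ 1/2 − (1+α)δ/(2α). -/

import Mathlib

open Classical in
/-- If at most `δm` points `p` satisfy `cost(p,P) < (2−α)OPT` and `γm` is the
number of points with `(1−α)OPT ≤ d(x*,p) ≤ (1+α)OPT`,
then `γ ≥ 1/2 − (1+α)δ/(2α)`. -/
theorem middle_ring_fraction {X : Type*} [MetricSpace X]
    (P : Finset X) (m : ℕ) (hm : P.card = m) (hm0 : 0 < m)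
    (cost : X → ℝ) (hcost : ∀ x, cost x = (m : ℝ)⁻¹ * ∑ p ∈ P, dist x p)
    (xstar : X) (hxstar : ∀ x, cost xstar ≤ cost x)
    (OPT : ℝ) (hOPT : OPT = cost xstar)
    (α δ : ℝ) (hα : 0 < α) (hδ : 0 ≤ δ)
    (hfew : ((P.filter (fun p => cost p < (2 - α) * OPT)).card : ℝ) ≤ δ * m)
    (γ : ℝ)
    (hγ : γ = ((P.filter (fun p =>
        (1 - α) * OPT ≤ dist xstar p ∧ dist xstar p ≤ (1 + α) * OPT)).card : ℝ) / m) :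
    1 / 2 - (1 + α) * δ / (2 * α) ≤ γ := by
  have hmR : (0:ℝ) < m := by exact_mod_cast hm0
  have hmne : (m:ℝ) ≠ 0 := ne_of_gt hmR
  have hαne : α ≠ 0 := ne_of_gt hα
  have hOPT0 : 0 ≤ OPT := by
    rw [hOPT, hcost]
    exact mul_nonneg (by positivity) (Finset.sum_nonneg fun p _ => dist_nonneg)
  have hsum : ∑ p ∈ P, dist xstar p = m * OPT := by
    rw [hOPT, hcost]; field_simp
  set A := P.filter (fun p => dist xstar p < (1-α)*OPT) with hA
  set B := P.filter (fun p =>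
      (1 - α) * OPT ≤ dist xstar p ∧ dist xstar p ≤ (1 + α) * OPT) with hB
  set C := P.filter (fun p => (1+α)*OPT < dist xstar p) with hC
  -- near points are cheap
  have hAsub : A ⊆ P.filter (fun p => cost p < (2 - α) * OPT) := by
    intro p hp
    rw [hA, Finset.mem_filter] at hp
    rw [Finset.mem_filter]
    refine ⟨hp.1, ?_⟩
    have hcp : cost p ≤ dist xstar p + OPT := by
      rw [hcost]
      have hle : ∑ q ∈ P, dist p q ≤ ∑ q ∈ P, (dist p xstar + dist xstar q) :=
        Finset.sum_le_sum fun q _ => dist_triangle p xstar q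
      have hsum2 : ∑ q ∈ P, (dist p xstar + dist xstar q)
          = m * dist p xstar + m * OPT := by
        rw [Finset.sum_add_distrib, Finset.sum_const, hsum, hm]; push_cast; ring
      calc (m:ℝ)⁻¹ * ∑ q ∈ P, dist p q
          ≤ (m:ℝ)⁻¹ * (m * dist p xstar + m * OPT) := by
            apply mul_le_mul_of_nonneg_left _ (by positivity)
            rw [← hsum2]; exact hle
        _ = dist xstar p + OPT := by rw [dist_comm]; field_simp
    linarith [hp.2]
  have hAcard : (A.card : ℝ) ≤ δ * m :=
    le_trans (by exact_mod_cast Finset.card_le_card hAsub) hfew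
  -- partition count
  have hcards : (m:ℝ) ≤ (A.card : ℝ) + B.card + C.card := by
    have hsub : P ⊆ A ∪ B ∪ C := by
      intro p hp
      simp only [hA, hB, hC, Finset.mem_union, Finset.mem_filter]
      rcases lt_or_ge (dist xstar p) ((1-α)*OPT) with h | h
      · exact Or.inl (Or.inl ⟨hp, h⟩)
      rcases le_or_gt (dist xstar p) ((1+α)*OPT) with h2 | h2
      · exact Or.inl (Or.inr ⟨hp, h, h2⟩)
      · exact Or.inr ⟨hp, h2⟩
    have h1 := Finset.card_le_card hsub
    have h2 := Finset.card_union_le (A ∪ B) C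
    have h3 := Finset.card_union_le A B
    have : m ≤ A.card + B.card + C.card := by omega
    exact_mod_cast this
  -- sum lower bound
  have hBC : Disjoint B C := by
    rw [Finset.disjoint_left]
    intro p hpB hpC
    rw [hB, Finset.mem_filter] at hpB
    rw [hC, Finset.mem_filter] at hpC
    linarith [hpB.2.2, hpC.2]
  have hsumB : (B.card : ℝ) * ((1-α)*OPT) ≤ ∑ p ∈ B, dist xstar p := by
    have := Finset.card_nsmul_le_sum B (fun p => dist xstar p) ((1-α)*OPT)
      (fun p hp => ((Finset.mem_filter.mp hp).2).1)
    simpa [nsmul_eq_mul] using this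
  have hsumC : (C.card : ℝ) * ((1+α)*OPT) ≤ ∑ p ∈ C, dist xstar p := by
    have := Finset.card_nsmul_le_sum C (fun p => dist xstar p) ((1+α)*OPT)
      (fun p hp => le_of_lt ((Finset.mem_filter.mp hp).2))
    simpa [nsmul_eq_mul] using this
  have hsumBC : (B.card:ℝ) * ((1-α)*OPT) + (C.card:ℝ) * ((1+α)*OPT) ≤ m * OPT := by
    have hun : B ∪ C ⊆ P := by
      apply Finset.union_subset <;> exact Finset.filter_subset _ _
    have h1 : ∑ p ∈ B ∪ C, dist xstar p ≤ ∑ p ∈ P, dist xstar p :=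
      Finset.sum_le_sum_of_subset_of_nonneg hun (fun p _ _ => dist_nonneg)
    rw [Finset.sum_union hBC] at h1
    rw [← hsum]
    linarith
  rcases eq_or_lt_of_le hOPT0 with h0 | hpos
  · -- OPT = 0 : every point is in the ring
    have hzero : ∀ p ∈ P, dist xstar p = 0 := by
      have hs0 : ∑ p ∈ P, dist xstar p = 0 := by rw [hsum, ← h0, mul_zero]
      intro p hp
      exact (Finset.sum_eq_zero_iff_of_nonneg (fun q _ => dist_nonneg)).mp hs0 p hp
    have hBall : B = P := by
      rw [hB]
      apply Finset.filter_true_of_mem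
      intro p hp
      rw [hzero p hp, ← h0]
      constructor <;> simp
    have hγ1 : γ = 1 := by
      rw [hγ, hBall, hm]
      field_simp
    have : 0 ≤ (1 + α) * δ / (2 * α) := by positivity
    rw [hγ1]; linarith
  · -- OPT > 0
    have h2 : (1-α) * B.card + (1+α) * C.card ≤ m := by
      nlinarith [hsumBC, hpos]
    have hp1 : (0:ℝ) ≤ (1+α) * ((A.card:ℝ) + B.card + C.card - m) :=
      mul_nonneg (by linarith) (by linarith)
    have hp2 : (1+α) * (A.card:ℝ) ≤ (1+α) * (δ * m) :=
      mul_le_mul_of_nonneg_left hAcard (by linarith)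
    have key : α * m ≤ (1+α) * (δ * m) + 2 * α * B.card := by nlinarith
    have h2α : (0:ℝ) < 2*α := by linarith
    rw [hγ]
    have e1 : 1/2 - (1+α)*δ/(2*α) = (α*m - (1+α)*δ*m) / (2*α*m) := by
      field_simp
    have e2 : (2*α*(B.card:ℝ))/(2*α*m) = (B.card:ℝ)/m :=
      mul_div_mul_left _ _ (ne_of_gt h2α)
    rw [e1, ← e2, div_le_div_iff₀ (by positivity) (by positivity)]
    nlinarith [mul_le_mul_of_nonneg_right
      (by linarith [key] : α * m - (1+α) * δ * m ≤ 2 * α * B.card)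
      (le_of_lt (by positivity : (0:ℝ) < 2 * α * m))]
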